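/- Let p, n ≥ 1 and fix real constants L ≥ m > 0. Let A ∈ ℝ^{np×np}, B ∈ ℝ^{np×p}, C, D ∈ ℝ^{p×np}, and suppose there exists D† ∈ ℝ^{np×p} with D D† = I_p, C D† = I_p and (A − I_{np}) D† = 0. Assume that at least one of the pairs (A,C), (A,D) is observable, i.e. either [the only v ∈ ℝ^{np} with C A^k v = 0 for all k ∈ ℕ is v = 0] or [the only v ∈ ℝ^{np} with D A^k v = 0 for all k ∈ ℕ is v = 0]. Then for every H ∈ S(m,L,p) with global minimizer z⋆, the point x⋆ = D† z⋆ is the unique x ∈ ℝ^{np} satisfying x = A x + B ∇H(C x) and D x = C x = z⋆. -/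
import Mathlib


noncomputable section

/-- Matrix action on Euclidean space vectors. -/
def mv {a b : ℕ} (M : Matrix (Fin a) (Fin b) ℝ) (x : EuclideanSpace ℝ (Fin b)) :
    EuclideanSpace ℝ (Fin a) :=
  (WithLp.equiv 2 _).symm (M.mulVec (WithLp.equiv 2 _ x))

/-- The class `S(m,L,p)` of differentiable, `m`-strongly convex functions with
`L`-Lipschitz gradient. -/
def SClass (m L : ℝ) (p : ℕ) : Set (EuclideanSpace ℝ (Fin p) → ℝ) :=
  {H | Differentiable ℝ H ∧
       ConvexOn ℝ Set.univ (fun x => H x - m / 2 * ‖x‖ ^ 2) ∧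
       LipschitzWith L.toNNReal (fun x => gradient H x)}

theorem stmt_1 (p n : ℕ) (hp : 1 ≤ p) (hn : 1 ≤ n) (m L : ℝ) (hm : 0 < m) (hmL : m ≤ L)
    (A : Matrix (Fin (n*p)) (Fin (n*p)) ℝ) (B : Matrix (Fin (n*p)) (Fin p) ℝ)
    (C D : Matrix (Fin p) (Fin (n*p)) ℝ)
    (Ddag : Matrix (Fin (n*p)) (Fin p) ℝ)
    (hD : D * Ddag = 1) (hC : C * Ddag = 1) (hA : (A - 1) * Ddag = 0)
    (hobs :
      (∀ v : Fin (n*p) → ℝ, (∀ k : ℕ, C.mulVec ((A ^ k).mulVec v) = 0) → v = 0) ∨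
      (∀ v : Fin (n*p) → ℝ, (∀ k : ℕ, D.mulVec ((A ^ k).mulVec v) = 0) → v = 0)) :
    ∀ H ∈ SClass m L p, ∀ zstar : EuclideanSpace ℝ (Fin p), (∀ x, H zstar ≤ H x) →
      (mv Ddag zstar = mv A (mv Ddag zstar) + mv B (gradient H (mv C (mv Ddag zstar))) ∧
        mv D (mv Ddag zstar) = zstar ∧ mv C (mv Ddag zstar) = zstar) ∧
      (∀ x : EuclideanSpace ℝ (Fin (n*p)),
        (x = mv A x + mv B (gradient H (mv C x)) ∧ mv D x = zstar ∧ mv C x = zstar) →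
        x = mv Ddag zstar) := by
  intro H hH zstar hzs
  have hAD : A * Ddag = Ddag := by
    have h := hA
    rwa [Matrix.sub_mul, Matrix.one_mul, sub_eq_zero] at h
  -- gradient at zstar is 0
  have hmin : IsLocalMin H zstar := Filter.Eventually.of_forall (fun x => hzs x)
  have hgrad : gradient H zstar = 0 := by
    have hfd : fderiv ℝ H zstar = 0 := hmin.fderiv_eq_zero
    simp [gradient, hfd]
  have hCx : mv C (mv Ddag zstar) = zstar := by
    simp [mv, Matrix.mulVec_mulVec, hC]
  have hDx : mv D (mv Ddag zstar) = zstar := by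
    simp [mv, Matrix.mulVec_mulVec, hD]
  have hAx : mv A (mv Ddag zstar) = mv Ddag zstar := by
    simp [mv, Matrix.mulVec_mulVec, hAD]
  refine ⟨⟨?_, hDx, hCx⟩, ?_⟩
  · rw [hCx, hgrad, hAx]
    simp [mv]
  · rintro x ⟨hx1, hx2, hx3⟩
    rw [hx3, hgrad] at hx1
    have hB0 : mv B (0 : EuclideanSpace ℝ (Fin p)) = 0 := by
      simp [mv]
    rw [hB0, add_zero] at hx1
    have hx1' : x = mv A x := hx1
    set u : Fin (n*p) → ℝ :=
      (WithLp.equiv 2 _ x) - (WithLp.equiv 2 _ (mv Ddag zstar)) with hu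
    have hAu : A.mulVec u = u := by
      have h1 : A.mulVec (WithLp.equiv 2 _ x) = WithLp.equiv 2 _ x := by
        have h := congrArg (WithLp.equiv 2 _) hx1'
        simp only [mv, Equiv.apply_symm_apply] at h
        exact h.symm
      have h2 : A.mulVec (WithLp.equiv 2 _ (mv Ddag zstar))
          = WithLp.equiv 2 _ (mv Ddag zstar) := by
        simp [mv, Matrix.mulVec_mulVec, hAD]
      rw [hu, Matrix.mulVec_sub, h1, h2]
    have hAku : ∀ k : ℕ, (A ^ k).mulVec u = u := by
      intro k
      induction k with
      | zero => simp
      | succ k ih =>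
        rw [pow_succ, ← Matrix.mulVec_mulVec, hAu, ih]
    have hCu : C.mulVec u = 0 := by
      have h1 : C.mulVec (WithLp.equiv 2 _ x) = WithLp.equiv 2 _ zstar := by
        have h := congrArg (WithLp.equiv 2 _) hx3
        simp only [mv, Equiv.apply_symm_apply] at h
        exact h
      have h2 : C.mulVec (WithLp.equiv 2 _ (mv Ddag zstar)) = WithLp.equiv 2 _ zstar := by
        simp [mv, Matrix.mulVec_mulVec, hC]
      rw [hu, Matrix.mulVec_sub, h1, h2, sub_self]
    have hDu : D.mulVec u = 0 := by
      have h1 : D.mulVec (WithLp.equiv 2 _ x) = WithLp.equiv 2 _ zstar := by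
        have h := congrArg (WithLp.equiv 2 _) hx2
        simp only [mv, Equiv.apply_symm_apply] at h
        exact h
      have h2 : D.mulVec (WithLp.equiv 2 _ (mv Ddag zstar)) = WithLp.equiv 2 _ zstar := by
        simp [mv, Matrix.mulVec_mulVec, hD]
      rw [hu, Matrix.mulVec_sub, h1, h2, sub_self]
    have hu0 : u = 0 := by
      rcases hobs with h | h
      · exact h u (fun k => by rw [hAku k, hCu])
      · exact h u (fun k => by rw [hAku k, hDu])
    have : (WithLp.equiv 2 _ x) = (WithLp.equiv 2 _ (mv Ddag zstar)) := by
      have := sub_eq_zero.mp (hu ▸ hu0)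
      exact this
    exact (WithLp.equiv 2 _).injective this
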